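/- For every n ≥ 4, the Möbius ladder on 2n vertices — that is, the circulant graph on ℤ/2nℤ in which i and j are adjacent iff i − j ∈ {1, −1, n} — contains an even conformal bicycle. -/

import Mathlib

open SimpleGraph

variable {V : Type*}

/-- A conformal bicycle: two vertex-disjoint cycles whose complement
(in the vertex set) induces a subgraph having a perfect matching. -/
def IsConformalBicycle (G : SimpleGraph V) {a b : V} (c₁ : G.Walk a a) (c₂ : G.Walk b b) : Prop :=
  c₁.IsCycle ∧ c₂.IsCycle ∧ (∀ x ∈ c₁.support, x ∉ c₂.support) ∧
    ∃ M : G.Subgraph, M.IsMatching ∧ M.verts = {v | v ∉ c₁.support ∧ v ∉ c₂.support}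

def HasConformalBicycle (G : SimpleGraph V) : Prop :=
  ∃ (a b : V) (c₁ : G.Walk a a) (c₂ : G.Walk b b), IsConformalBicycle G c₁ c₂

def HasOddConformalBicycle (G : SimpleGraph V) : Prop :=
  ∃ (a b : V) (c₁ : G.Walk a a) (c₂ : G.Walk b b),
    IsConformalBicycle G c₁ c₂ ∧ Odd c₁.length ∧ Odd c₂.length

def HasEvenConformalBicycle (G : SimpleGraph V) : Prop :=
  ∃ (a b : V) (c₁ : G.Walk a a) (c₂ : G.Walk b b),
    IsConformalBicycle G c₁ c₂ ∧ Even c₁.length ∧ Even c₂.length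

/-- The Möbius ladder on 2n vertices: i ~ j iff i - j ∈ {1, -1, n} in ℤ/2nℤ. -/
def mobiusLadder (n : ℕ) : SimpleGraph (ZMod (2 * n)) :=
  SimpleGraph.fromRel (fun a b => a - b = 1 ∨ a - b = (n : ZMod (2 * n)))

set_option maxHeartbeats 1000000 in
/-- For n ≥ 4, the Möbius ladder on 2n vertices contains an even conformal
bicycle. -/
theorem mobiusLadder_has_even_conformal_bicycle (n : ℕ) (hn : 4 ≤ n) :
    HasEvenConformalBicycle (mobiusLadder n) := by
  haveI : NeZero (2 * n) := ⟨by omega⟩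
  set N : ZMod (2 * n) := ((n : ℕ) : ZMod (2*n)) with hN
  have hNN : N + N = 0 := by
    rw [hN, ← Nat.cast_add, ← two_mul, ZMod.natCast_self]
  have NE : ∀ a b : ℕ, a < 2*n → b < 2*n → a ≠ b → ((a:ZMod (2*n)) ≠ (b:ZMod (2*n))) := by
    intro a b ha hb hab h
    exact hab (by rw [← ZMod.val_cast_of_lt ha, ← ZMod.val_cast_of_lt hb, h])
  have d01 : (0 : ZMod (2*n)) ≠ 1 := by
    have := NE (0) (1) (by omega) (by omega) (by omega); push_cast at this; exact this
  have d02 : (0 : ZMod (2*n)) ≠ 2 := by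
    have := NE (0) (2) (by omega) (by omega) (by omega); push_cast at this; exact this
  have d03 : (0 : ZMod (2*n)) ≠ 3 := by
    have := NE (0) (3) (by omega) (by omega) (by omega); push_cast at this; exact this
  have d04 : (0 : ZMod (2*n)) ≠ N := by
    have := NE (0) (n) (by omega) (by omega) (by omega); push_cast at this; exact this
  have d05 : (0 : ZMod (2*n)) ≠ N+1 := by
    have := NE (0) (n+1) (by omega) (by omega) (by omega); push_cast at this; exact this
  have d06 : (0 : ZMod (2*n)) ≠ N+2 := by
    have := NE (0) (n+2) (by omega) (by omega) (by omega); push_cast at this; exact this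
  have d07 : (0 : ZMod (2*n)) ≠ N+3 := by
    have := NE (0) (n+3) (by omega) (by omega) (by omega); push_cast at this; exact this
  have d12 : (1 : ZMod (2*n)) ≠ 2 := by
    have := NE (1) (2) (by omega) (by omega) (by omega); push_cast at this; exact this
  have d13 : (1 : ZMod (2*n)) ≠ 3 := by
    have := NE (1) (3) (by omega) (by omega) (by omega); push_cast at this; exact this
  have d14 : (1 : ZMod (2*n)) ≠ N := by
    have := NE (1) (n) (by omega) (by omega) (by omega); push_cast at this; exact this
  have d15 : (1 : ZMod (2*n)) ≠ N+1 := by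
    have := NE (1) (n+1) (by omega) (by omega) (by omega); push_cast at this; exact this
  have d16 : (1 : ZMod (2*n)) ≠ N+2 := by
    have := NE (1) (n+2) (by omega) (by omega) (by omega); push_cast at this; exact this
  have d17 : (1 : ZMod (2*n)) ≠ N+3 := by
    have := NE (1) (n+3) (by omega) (by omega) (by omega); push_cast at this; exact this
  have d23 : (2 : ZMod (2*n)) ≠ 3 := by
    have := NE (2) (3) (by omega) (by omega) (by omega); push_cast at this; exact this
  have d24 : (2 : ZMod (2*n)) ≠ N := by
    have := NE (2) (n) (by omega) (by omega) (by omega); push_cast at this; exact this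
  have d25 : (2 : ZMod (2*n)) ≠ N+1 := by
    have := NE (2) (n+1) (by omega) (by omega) (by omega); push_cast at this; exact this
  have d26 : (2 : ZMod (2*n)) ≠ N+2 := by
    have := NE (2) (n+2) (by omega) (by omega) (by omega); push_cast at this; exact this
  have d27 : (2 : ZMod (2*n)) ≠ N+3 := by
    have := NE (2) (n+3) (by omega) (by omega) (by omega); push_cast at this; exact this
  have d34 : (3 : ZMod (2*n)) ≠ N := by
    have := NE (3) (n) (by omega) (by omega) (by omega); push_cast at this; exact this
  have d35 : (3 : ZMod (2*n)) ≠ N+1 := by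
    have := NE (3) (n+1) (by omega) (by omega) (by omega); push_cast at this; exact this
  have d36 : (3 : ZMod (2*n)) ≠ N+2 := by
    have := NE (3) (n+2) (by omega) (by omega) (by omega); push_cast at this; exact this
  have d37 : (3 : ZMod (2*n)) ≠ N+3 := by
    have := NE (3) (n+3) (by omega) (by omega) (by omega); push_cast at this; exact this
  have d45 : (N : ZMod (2*n)) ≠ N+1 := by
    have := NE (n) (n+1) (by omega) (by omega) (by omega); push_cast at this; exact this
  have d46 : (N : ZMod (2*n)) ≠ N+2 := by
    have := NE (n) (n+2) (by omega) (by omega) (by omega); push_cast at this; exact this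
  have d47 : (N : ZMod (2*n)) ≠ N+3 := by
    have := NE (n) (n+3) (by omega) (by omega) (by omega); push_cast at this; exact this
  have d56 : (N+1 : ZMod (2*n)) ≠ N+2 := by
    have := NE (n+1) (n+2) (by omega) (by omega) (by omega); push_cast at this; exact this
  have d57 : (N+1 : ZMod (2*n)) ≠ N+3 := by
    have := NE (n+1) (n+3) (by omega) (by omega) (by omega); push_cast at this; exact this
  have d67 : (N+2 : ZMod (2*n)) ≠ N+3 := by
    have := NE (n+2) (n+3) (by omega) (by omega) (by omega); push_cast at this; exact this
  set G := mobiusLadder n with hG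
  have adj : ∀ a b : ZMod (2*n), a ≠ b →
      (a - b = 1 ∨ a - b = N ∨ b - a = 1 ∨ b - a = N) → G.Adj a b := by
    intro a b hab h
    rw [hG, mobiusLadder, fromRel_adj]
    exact ⟨hab, by tauto⟩
  -- the eight adjacencies
  have a01 : G.Adj 0 1 := adj 0 1 d01 (by right; right; left; ring)
  have a15 : G.Adj 1 (N+1) := adj _ _ d15 (by right; right; right; ring)
  have a54 : G.Adj (N+1) N := adj _ _ d45.symm (by left; ring)
  have a40 : G.Adj N 0 := adj _ _ d04.symm (by right; left; ring)
  have a23 : G.Adj 2 3 := adj _ _ d23 (by right; right; left; ring)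
  have a37 : G.Adj 3 (N+3) := adj _ _ d37 (by right; right; right; ring)
  have a76 : G.Adj (N+3) (N+2) := adj _ _ d67.symm (by left; ring)
  have a62 : G.Adj (N+2) 2 := adj _ _ d26.symm (by right; left; ring)
  -- rung adjacency
  have arung : ∀ v : ZMod (2*n), G.Adj v (v + N) := by
    intro v
    refine adj _ _ (fun h => d04.symm ?_) (by right; right; right; ring)
    have := congrArg (· - v) h
    simpa using this.symm
  let c₁ : G.Walk 0 0 := .cons a01 (.cons a15 (.cons a54 (.cons a40 .nil)))
  let c₂ : G.Walk 2 2 := .cons a23 (.cons a37 (.cons a76 (.cons a62 .nil)))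
  have hsup1 : c₁.support = [0, 1, N+1, N, 0] := rfl
  have hsup2 : c₂.support = [2, 3, N+3, N+2, 2] := rfl
  have hcyc1 : c₁.IsCycle := by
    rw [SimpleGraph.Walk.isCycle_def, SimpleGraph.Walk.isTrail_def]
    refine ⟨?_, by simp [c₁], ?_⟩
    · simp only [c₁, SimpleGraph.Walk.edges_cons, SimpleGraph.Walk.edges_nil]
      simp [List.nodup_cons, Sym2.eq_iff]
      tauto
    · rw [hsup1]
      simp [List.nodup_cons]
      tauto
  have hcyc2 : c₂.IsCycle := by
    rw [SimpleGraph.Walk.isCycle_def, SimpleGraph.Walk.isTrail_def]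
    refine ⟨?_, by simp [c₂], ?_⟩
    · simp only [c₂, SimpleGraph.Walk.edges_cons, SimpleGraph.Walk.edges_nil]
      simp [List.nodup_cons, Sym2.eq_iff]
      tauto
    · rw [hsup2]
      simp [List.nodup_cons]
      tauto
  have hdisj : ∀ x ∈ c₁.support, x ∉ c₂.support := by
    rw [hsup1]
    intro x hx
    rw [hsup2]
    simp only [List.mem_cons, List.not_mem_nil, or_false] at hx ⊢
    rcases hx with rfl|rfl|rfl|rfl|rfl <;> push_neg <;>
      refine ⟨?_, ?_, ?_, ?_, ?_⟩ <;> first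
        | exact d02 | exact d03 | exact d07 | exact d06
        | exact d12 | exact d13 | exact d17 | exact d16
        | exact d25.symm | exact d35.symm | exact d57 | exact d56
        | exact d24.symm | exact d34.symm | exact d47 | exact d46
  -- the set of uncovered vertices
  set S : Set (ZMod (2*n)) := {v | v ∉ c₁.support ∧ v ∉ c₂.support} with hS
  have hadd : ∀ x v : ZMod (2*n), v + N = x → v = x + N := by
    intro x v h
    rw [← h, add_assoc, hNN, add_zero]
  have hSclosed : ∀ v ∈ S, v + N ∈ S := by
    rintro v ⟨h1, h2⟩
    rw [hsup1] at h1; rw [hsup2] at h2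
    constructor
    · rw [hsup1]
      simp only [List.mem_cons, List.not_mem_nil, or_false] at h1 ⊢
      push_neg at h1 ⊢
      obtain ⟨e0, e1, e5, e4, -⟩ := h1
      refine ⟨?_, ?_, ?_, ?_, ?_⟩ <;> intro h <;> first
        | exact e0 (by linear_combination h)
        | exact e0 (by linear_combination h - hNN)
        | exact e1 (by linear_combination h)
        | exact e1 (by linear_combination h - hNN)
        | exact e4 (by linear_combination h)
        | exact e4 (by linear_combination h - hNN)
        | exact e5 (by linear_combination h)
        | exact e5 (by linear_combination h - hNN)
    · rw [hsup2]
      simp only [List.mem_cons, List.not_mem_nil, or_false] at h2 ⊢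
      push_neg at h2 ⊢
      obtain ⟨e2, e3, e7, e6, -⟩ := h2
      refine ⟨?_, ?_, ?_, ?_, ?_⟩ <;> intro h <;> first
        | exact e2 (by linear_combination h)
        | exact e2 (by linear_combination h - hNN)
        | exact e3 (by linear_combination h)
        | exact e3 (by linear_combination h - hNN)
        | exact e6 (by linear_combination h)
        | exact e6 (by linear_combination h - hNN)
        | exact e7 (by linear_combination h)
        | exact e7 (by linear_combination h - hNN)
  let M : G.Subgraph :=
    { verts := S
      Adj := fun a b => a ∈ S ∧ b ∈ S ∧ b = a + N
      adj_sub := by rintro a b ⟨-, -, rfl⟩; exact arung a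
      edge_vert := by rintro a b ⟨ha, -, -⟩; exact ha
      symm := by
        constructor
        rintro a b ⟨ha, hb, rfl⟩
        exact ⟨hb, ha, by rw [add_assoc, hNN, add_zero]⟩ }
  refine ⟨0, 2, c₁, c₂, ⟨hcyc1, hcyc2, hdisj, M, ?_, rfl⟩, ?_, ?_⟩
  · intro v hv
    refine ⟨v + N, ⟨hv, hSclosed v hv, rfl⟩, ?_⟩
    rintro w ⟨-, -, rfl⟩
    rfl
  · rw [show c₁.length = 4 from rfl]; decide
  · rw [show c₂.length = 4 from rfl]; decide
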